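/- Let n = 1, s ∈ (0,1), α ∈ (0,1), and let c > 0 be a fixed constant. There exist ε̄ = ε̄(α, s, c) > 0 and C_o = C_o(α, s, c) > 0 such that for every ε ∈ (0, ε̄) there exists d > 1/2 with the following properties: the set E := (0, 1/2) ∪ (d, d + 1/2) ⊂ ℝ satisfies the Euler–Lagrange equation κ_E(x) + c ε V_E(x) = λ for all x ∈ ∂E = {0, 1/2, d, d+1/2} and some λ ∈ ℝ; E has two connected components; and diam(E) = d + 1/2 ≥ C_o · ε^{−1/(1+s−α)}. In particular, the diameter of such critical points is not bounded uniformly in ε. -/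

import Mathlib

open MeasureTheory Set Filter Metric Bornology Topology

noncomputable section

/-- The Riesz potential `V_E(x) = ∫_E |x-y|^{-α} dy` of a set `E ⊆ ℝ`. -/
def rieszPot1 (α : ℝ) (E : Set ℝ) (x : ℝ) : ℝ :=
  ∫ y in E, |x - y| ^ (-α)

/-- `IsFracMeanCurv1 s E x κ` says that the principal value
`κ_E(x) = p.v. ∫ (χ_{ℝ∖E}(y) - χ_E(y)) |x-y|^{-(1+s)} dy` exists and equals `κ`. -/
def IsFracMeanCurv1 (s : ℝ) (E : Set ℝ) (x κ : ℝ) : Prop :=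
  Tendsto (fun δ : ℝ => ∫ y in {y : ℝ | δ < |x - y|},
      (Eᶜ.indicator (fun _ => (1 : ℝ)) y - E.indicator (fun _ => (1 : ℝ)) y)
        * |x - y| ^ (-(1 + s)))
    (𝓝[>] (0 : ℝ)) (𝓝 κ)

private lemma memb_sub (x : ℝ) : MeasurableEmbedding (fun y : ℝ => y - x) :=
  (Homeomorph.subRight x).isClosedEmbedding.measurableEmbedding

private lemma memb_sub_left (x : ℝ) : MeasurableEmbedding (fun y : ℝ => x - y) :=
  (Homeomorph.subLeft x).isClosedEmbedding.measurableEmbedding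

private lemma mp_sub (x : ℝ) : MeasurePreserving (fun y : ℝ => y - x) volume volume :=
  measurePreserving_sub_right volume x

private lemma mp_sub_left (x : ℝ) : MeasurePreserving (fun y : ℝ => x - y) volume volume := by
  simp_rw [sub_eq_add_neg]
  exact (measurePreserving_add_left volume x).comp (Measure.measurePreserving_neg volume)

private lemma pre_sub (x a : ℝ) : (fun y : ℝ => y - x) ⁻¹' (Ioi (a - x)) = Ioi a := by
  ext y; simp [sub_lt_sub_iff_right]

private lemma pre_sub_left (x b : ℝ) : (fun y : ℝ => x - y) ⁻¹' (Ioi (x - b)) = Iio b := by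
  ext y; simp

private lemma integrableOn_tail_right {p x a : ℝ} (hp : p < -1) (hxa : x < a) :
    IntegrableOn (fun y => |x - y| ^ p) (Ioi a) := by
  have h0 : (0:ℝ) < a - x := by linarith
  have h1 : IntegrableOn ((fun t : ℝ => t ^ p) ∘ fun y : ℝ => y - x) (Ioi a) := by
    rw [← pre_sub x a]
    exact ((mp_sub x).integrableOn_comp_preimage (memb_sub x)).mpr
      (integrableOn_Ioi_rpow_of_lt hp h0)
  exact h1.congr_fun (fun y hy => by
    simp only [Function.comp]
    rw [abs_sub_comm, abs_of_pos (by simpa using (hxa.trans (mem_Ioi.mp hy)) : (0:ℝ) < y - x)])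
    measurableSet_Ioi

private lemma integral_tail_right {p x a : ℝ} (hp : p < -1) (hxa : x < a) :
    ∫ y in Ioi a, |x - y| ^ p = -(a - x) ^ (p + 1) / (p + 1) := by
  have h0 : (0:ℝ) < a - x := by linarith
  calc ∫ y in Ioi a, |x - y| ^ p = ∫ y in Ioi a, (y - x) ^ p := by
        refine setIntegral_congr_fun measurableSet_Ioi fun y hy => ?_
        rw [abs_sub_comm, abs_of_pos (by simpa using hxa.trans (mem_Ioi.mp hy) : (0:ℝ) < y - x)]
    _ = ∫ t in Ioi (a - x), t ^ p := by
        rw [← pre_sub x a]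
        exact (mp_sub x).setIntegral_preimage_emb (memb_sub x) (fun t => t ^ p) (Ioi (a - x))
    _ = -(a - x) ^ (p + 1) / (p + 1) := integral_Ioi_rpow_of_lt hp h0

private lemma integrableOn_tail_left {p x b : ℝ} (hp : p < -1) (hbx : b < x) :
    IntegrableOn (fun y => |x - y| ^ p) (Iio b) := by
  have h0 : (0:ℝ) < x - b := by linarith
  have h1 : IntegrableOn ((fun t : ℝ => t ^ p) ∘ fun y : ℝ => x - y) (Iio b) := by
    rw [← pre_sub_left x b]
    exact ((mp_sub_left x).integrableOn_comp_preimage (memb_sub_left x)).mpr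
      (integrableOn_Ioi_rpow_of_lt hp h0)
  exact h1.congr_fun (fun y hy => by
    simp only [Function.comp]
    rw [abs_of_pos (by simp only [mem_Iio] at hy; linarith : (0:ℝ) < x - y)])
    measurableSet_Iio

private lemma integral_tail_left {p x b : ℝ} (hp : p < -1) (hbx : b < x) :
    ∫ y in Iio b, |x - y| ^ p = -(x - b) ^ (p + 1) / (p + 1) := by
  have h0 : (0:ℝ) < x - b := by linarith
  calc ∫ y in Iio b, |x - y| ^ p = ∫ y in Iio b, (x - y) ^ p := by
        refine setIntegral_congr_fun measurableSet_Iio fun y hy => ?_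
        rw [abs_of_pos (by simp only [mem_Iio] at hy; linarith : (0:ℝ) < x - y)]
    _ = ∫ t in Ioi (x - b), t ^ p := by
        rw [← pre_sub_left x b]
        exact (mp_sub_left x).setIntegral_preimage_emb (memb_sub_left x) (fun t => t ^ p) (Ioi (x - b))
    _ = -(x - b) ^ (p + 1) / (p + 1) := integral_Ioi_rpow_of_lt hp h0

private lemma dom_eq (x δ : ℝ) : {y : ℝ | δ < |x - y|} = Iio (x - δ) ∪ Ioi (x + δ) := by
  ext y
  simp only [mem_setOf_eq, mem_union, mem_Iio, mem_Ioi, lt_abs]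
  constructor
  · rintro (h | h)
    · exact Or.inl (by linarith)
    · exact Or.inr (by linarith)
  · rintro (h | h)
    · exact Or.inl (by linarith)
    · exact Or.inr (by linarith)

private lemma disj_dom (x δ : ℝ) (hδ : 0 < δ) : Disjoint (Iio (x - δ)) (Ioi (x + δ)) := by
  rw [Set.disjoint_left]
  intro y h1 h2
  simp only [mem_Iio, mem_Ioi] at h1 h2
  linarith

private lemma integrableOn_dom {p x δ : ℝ} (hp : p < -1) (hδ : 0 < δ) :
    IntegrableOn (fun y => |x - y| ^ p) {y : ℝ | δ < |x - y|} := by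
  rw [dom_eq]
  exact (integrableOn_tail_left hp (by linarith)).union (integrableOn_tail_right hp (by linarith))

private lemma integral_dom {p x δ : ℝ} (hp : p < -1) (hδ : 0 < δ) :
    ∫ y in {y : ℝ | δ < |x - y|}, |x - y| ^ p = -2 * δ ^ (p + 1) / (p + 1) := by
  rw [dom_eq, setIntegral_union (disj_dom x δ hδ) measurableSet_Ioi
      (integrableOn_tail_left hp (by linarith)) (integrableOn_tail_right hp (by linarith)),
    integral_tail_left hp (by linarith), integral_tail_right hp (by linarith)]
  rw [show x - (x - δ) = δ by ring, show x + δ - x = δ by ring]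
  ring

private lemma intervalIntegrable_shift {q x a b : ℝ}
    (h : -1 < q ∨ (0:ℝ) ∉ Set.uIcc (a - x) (b - x)) :
    IntervalIntegrable (fun y => (y - x) ^ q) volume a b := by
  rcases h with h | h
  · simpa using (intervalIntegral.intervalIntegrable_rpow' h (a := a - x) (b := b - x)).comp_sub_right x
  · simpa using (intervalIntegral.intervalIntegrable_rpow (Or.inr h) (a := a - x) (b := b - x)).comp_sub_right x

private lemma pieceA {q x a b : ℝ} (hxa : x ≤ a) (hab : a ≤ b)
    (h : -1 < q ∨ (q ≠ -1 ∧ x < a)) :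
    IntegrableOn (fun y => |x - y| ^ q) (Ioo a b) ∧
    ∫ y in Ioo a b, |x - y| ^ q = ((b - x) ^ (q + 1) - (a - x) ^ (q + 1)) / (q + 1) := by
  have h0 : -1 < q ∨ q ≠ -1 ∧ (0:ℝ) ∉ Set.uIcc (a - x) (b - x) := by
    rcases h with h | ⟨h1, h2⟩
    · exact Or.inl h
    · refine Or.inr ⟨h1, ?_⟩
      rw [uIcc_of_le (by linarith)]
      intro hc
      rcases hc with ⟨hc1, _⟩
      linarith
  have hii : IntervalIntegrable (fun y => (y - x) ^ q) volume a b :=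
    intervalIntegrable_shift (h0.imp id And.right)
  have heq : EqOn (fun y : ℝ => |x - y| ^ q) (fun y : ℝ => (y - x) ^ q) (Ioo a b) := by
    intro y hy
    simp only
    rw [abs_sub_comm, abs_of_nonneg (by rcases hy with ⟨h1, _⟩; linarith : (0:ℝ) ≤ y - x)]
  constructor
  · exact ((hii.1.mono_set Ioo_subset_Ioc_self).congr_fun
      (fun y hy => (heq hy).symm) measurableSet_Ioo)
  · calc ∫ y in Ioo a b, |x - y| ^ q = ∫ y in Ioo a b, (y - x) ^ q :=
          setIntegral_congr_fun measurableSet_Ioo heq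
      _ = ∫ y in Ioc a b, (y - x) ^ q := integral_Ioc_eq_integral_Ioo.symm
      _ = ∫ y in a..b, (y - x) ^ q := (intervalIntegral.integral_of_le hab).symm
      _ = ∫ t in (a - x)..(b - x), t ^ q := intervalIntegral.integral_comp_sub_right (fun t => t ^ q) x
      _ = ((b - x) ^ (q + 1) - (a - x) ^ (q + 1)) / (q + 1) := integral_rpow h0

private lemma pieceB {q x a b : ℝ} (hab : a ≤ b) (hbx : b ≤ x)
    (h : -1 < q ∨ (q ≠ -1 ∧ b < x)) :
    IntegrableOn (fun y => |x - y| ^ q) (Ioo a b) ∧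
    ∫ y in Ioo a b, |x - y| ^ q = ((x - a) ^ (q + 1) - (x - b) ^ (q + 1)) / (q + 1) := by
  have h0 : -1 < q ∨ q ≠ -1 ∧ (0:ℝ) ∉ Set.uIcc (x - b) (x - a) := by
    rcases h with h | ⟨h1, h2⟩
    · exact Or.inl h
    · refine Or.inr ⟨h1, ?_⟩
      rw [uIcc_of_le (by linarith)]
      intro hc
      rcases hc with ⟨hc1, _⟩
      linarith
  have hii : IntervalIntegrable (fun y => (x - y) ^ q) volume a b := by
    rcases h0 with h' | h'
    · simpa using (intervalIntegral.intervalIntegrable_rpow' h' (a := x - a) (b := x - b)).comp_sub_left x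
    · simpa using
        (intervalIntegral.intervalIntegrable_rpow (Or.inr (by rw [Set.uIcc_comm]; exact h'.2)) (a := x - a) (b := x - b)).comp_sub_left x
  have heq : EqOn (fun y : ℝ => |x - y| ^ q) (fun y : ℝ => (x - y) ^ q) (Ioo a b) := by
    intro y hy
    simp only
    rw [abs_of_nonneg (by rcases hy with ⟨_, h2⟩; linarith : (0:ℝ) ≤ x - y)]
  constructor
  · exact ((hii.1.mono_set Ioo_subset_Ioc_self).congr_fun
      (fun y hy => (heq hy).symm) measurableSet_Ioo)
  · calc ∫ y in Ioo a b, |x - y| ^ q = ∫ y in Ioo a b, (x - y) ^ q :=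
          setIntegral_congr_fun measurableSet_Ioo heq
      _ = ∫ y in Ioc a b, (x - y) ^ q := integral_Ioc_eq_integral_Ioo.symm
      _ = ∫ y in a..b, (x - y) ^ q := (intervalIntegral.integral_of_le hab).symm
      _ = ∫ t in (x - b)..(x - a), t ^ q := intervalIntegral.integral_comp_sub_left (fun t => t ^ q) x
      _ = ((x - a) ^ (q + 1) - (x - b) ^ (q + 1)) / (q + 1) := integral_rpow h0

/-- decomposition of the PV integrand -/
private lemma I_delta_eq {q x δ : ℝ} {E : Set ℝ} (hE : MeasurableSet E)
    (hq : q < -1) (hδ : 0 < δ)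
    (hint : IntegrableOn (fun y => |x - y| ^ q) (E ∩ {y : ℝ | δ < |x - y|})) :
    ∫ y in {y : ℝ | δ < |x - y|},
        (Eᶜ.indicator (fun _ => (1 : ℝ)) y - E.indicator (fun _ => (1 : ℝ)) y) * |x - y| ^ q
      = -2 * δ ^ (q + 1) / (q + 1)
        - 2 * ∫ y in E ∩ {y : ℝ | δ < |x - y|}, |x - y| ^ q := by
  set D := {y : ℝ | δ < |x - y|} with hD
  have hDm : MeasurableSet D := by
    have : D = (fun y => |x - y|) ⁻¹' Ioi δ := rfl
    rw [this]
    exact (measurable_const.sub measurable_id).abs measurableSet_Ioi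
  have hfun : ∀ y, (Eᶜ.indicator (fun _ => (1 : ℝ)) y - E.indicator (fun _ => (1 : ℝ)) y)
      * |x - y| ^ q = |x - y| ^ q - 2 * E.indicator (fun z => |x - z| ^ q) y := by
    intro y
    by_cases hy : y ∈ E
    · simp [Set.indicator_of_mem hy, Set.indicator_of_notMem (by simpa using hy : y ∉ Eᶜ)]
      ring
    · simp [Set.indicator_of_notMem hy, Set.indicator_of_mem (by simpa using hy : y ∈ Eᶜ)]
  have hg : IntegrableOn (fun y => |x - y| ^ q) D := integrableOn_dom hq hδ
  have hind : IntegrableOn (fun y => E.indicator (fun z => |x - z| ^ q) y) D := by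
    rw [IntegrableOn, integrable_indicator_iff hE, IntegrableOn,
      Measure.restrict_restrict hE]
    exact hint
  calc ∫ y in D, (Eᶜ.indicator (fun _ => (1 : ℝ)) y - E.indicator (fun _ => (1 : ℝ)) y)
        * |x - y| ^ q
      = ∫ y in D, (|x - y| ^ q - 2 * E.indicator (fun z => |x - z| ^ q) y) := by
        exact setIntegral_congr_fun hDm (fun y _ => hfun y)
    _ = (∫ y in D, |x - y| ^ q) - ∫ y in D, 2 * E.indicator (fun z => |x - z| ^ q) y :=
        integral_sub hg (hind.const_mul 2)
    _ = (∫ y in D, |x - y| ^ q) - 2 * ∫ y in D, E.indicator (fun z => |x - z| ^ q) y := by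
        rw [integral_const_mul]
    _ = -2 * δ ^ (q + 1) / (q + 1) - 2 * ∫ y in E ∩ D, |x - y| ^ q := by
        rw [integral_dom hq hδ, setIntegral_indicator hE, inter_comm]

private lemma hEmeas (d : ℝ) :
    MeasurableSet (Ioo (0:ℝ) (1/2) ∪ Ioo d (d + 1/2)) :=
  measurableSet_Ioo.union measurableSet_Ioo

private lemma curv0 {s d : ℝ} (hs0 : 0 < s) (hd : 2 ≤ d) :
    IsFracMeanCurv1 s (Ioo 0 (1/2) ∪ Ioo d (d + 1/2)) 0
      (2/s * ((1/2:ℝ) ^ (-s) + (d + 1/2) ^ (-s) - d ^ (-s))) := by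
  unfold IsFracMeanCurv1
  refine Tendsto.congr' ?_ tendsto_const_nhds
  filter_upwards [Ioo_mem_nhdsGT_of_mem
    (by norm_num : (0:ℝ) ∈ Ico (0:ℝ) (1/4))] with δ hδi
  obtain ⟨hδ0, hδ4⟩ := hδi
  set E : Set ℝ := Ioo (0:ℝ) (1/2) ∪ Ioo d (d + 1/2) with hEdef
  have hq : -(1+s) < -1 := by linarith
  have hqne : -(1+s) ≠ -1 := by intro h; nlinarith [neg_injective h]
  have hED : E ∩ {y : ℝ | δ < |(0:ℝ) - y|} = Ioo δ (1/2) ∪ Ioo d (d + 1/2) := by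
    rw [dom_eq]
    ext y
    simp only [hEdef, mem_inter_iff, mem_union, mem_Ioo, mem_Iio, mem_Ioi, zero_sub, zero_add]
    constructor
    · rintro ⟨h1 | h1, h2 | h2⟩
      · exfalso; linarith [h1.1]
      · exact Or.inl ⟨h2, h1.2⟩
      · exfalso; linarith [h1.1]
      · exact Or.inr h1
    · rintro (⟨h1, h2⟩ | ⟨h1, h2⟩)
      · exact ⟨Or.inl ⟨by linarith, h2⟩, Or.inr (by linarith)⟩
      · exact ⟨Or.inr ⟨h1, h2⟩, Or.inr (by linarith)⟩
  have p1 := pieceA (q := -(1+s)) (x := 0) (a := δ) (b := 1/2)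
    (by linarith) (by linarith) (Or.inr ⟨hqne, hδ0⟩)
  have p2 := pieceA (q := -(1+s)) (x := 0) (a := d) (b := d + 1/2)
    (by linarith) (by linarith) (Or.inr ⟨hqne, by linarith⟩)
  have hdisj : Disjoint (Ioo δ (1/2:ℝ)) (Ioo d (d + 1/2)) := by
    rw [Set.disjoint_left]; rintro y ⟨_, h1⟩ ⟨h2, _⟩; linarith
  have hint : IntegrableOn (fun y => |(0:ℝ) - y| ^ (-(1+s)))
      (E ∩ {y : ℝ | δ < |(0:ℝ) - y|}) := by
    rw [hED]; exact p1.1.union p2.1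
  rw [I_delta_eq (hEmeas d) hq hδ0 hint, hED,
    setIntegral_union hdisj measurableSet_Ioo p1.1 p2.1, p1.2, p2.2,
    show -(1+s) + 1 = -s by ring]
  simp only [sub_zero]
  have hsne : s ≠ 0 := ne_of_gt hs0
  rw [div_neg, div_neg, div_neg]
  field_simp
  ring

private lemma curv_half {s d : ℝ} (hs0 : 0 < s) (hd : 2 ≤ d) :
    IsFracMeanCurv1 s (Ioo 0 (1/2) ∪ Ioo d (d + 1/2)) (1/2)
      (2/s * ((1/2:ℝ) ^ (-s) + d ^ (-s) - (d - 1/2) ^ (-s))) := by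
  unfold IsFracMeanCurv1
  refine Tendsto.congr' ?_ tendsto_const_nhds
  filter_upwards [Ioo_mem_nhdsGT_of_mem
    (by norm_num : (0:ℝ) ∈ Ico (0:ℝ) (1/4))] with δ hδi
  obtain ⟨hδ0, hδ4⟩ := hδi
  set E : Set ℝ := Ioo (0:ℝ) (1/2) ∪ Ioo d (d + 1/2) with hEdef
  have hq : -(1+s) < -1 := by linarith
  have hqne : -(1+s) ≠ -1 := by intro h; nlinarith [neg_injective h]
  have hED : E ∩ {y : ℝ | δ < |(1/2:ℝ) - y|} = Ioo 0 (1/2 - δ) ∪ Ioo d (d + 1/2) := by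
    rw [dom_eq]
    ext y
    simp only [hEdef, mem_inter_iff, mem_union, mem_Ioo, mem_Iio, mem_Ioi]
    constructor
    · rintro ⟨h1 | h1, h2 | h2⟩
      · exact Or.inl ⟨h1.1, h2⟩
      · exfalso; linarith [h1.2]
      · exfalso; linarith [h1.1]
      · exact Or.inr h1
    · rintro (⟨h1, h2⟩ | ⟨h1, h2⟩)
      · exact ⟨Or.inl ⟨h1, by linarith⟩, Or.inl (by linarith)⟩
      · exact ⟨Or.inr ⟨h1, h2⟩, Or.inr (by linarith)⟩
  have p1 := pieceB (q := -(1+s)) (x := 1/2) (a := 0) (b := 1/2 - δ)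
    (by linarith) (by linarith) (Or.inr ⟨hqne, by linarith⟩)
  have p2 := pieceA (q := -(1+s)) (x := 1/2) (a := d) (b := d + 1/2)
    (by linarith) (by linarith) (Or.inr ⟨hqne, by linarith⟩)
  have hdisj : Disjoint (Ioo (0:ℝ) (1/2 - δ)) (Ioo d (d + 1/2)) := by
    rw [Set.disjoint_left]; rintro y ⟨_, h1⟩ ⟨h2, _⟩; linarith
  have hint : IntegrableOn (fun y => |(1/2:ℝ) - y| ^ (-(1+s)))
      (E ∩ {y : ℝ | δ < |(1/2:ℝ) - y|}) := by
    rw [hED]; exact p1.1.union p2.1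
  rw [I_delta_eq (hEmeas d) hq hδ0 hint, hED,
    setIntegral_union hdisj measurableSet_Ioo p1.1 p2.1, p1.2, p2.2,
    show -(1+s) + 1 = -s by ring,
    show (1:ℝ)/2 - (1/2 - δ) = δ by ring, show (1:ℝ)/2 - 0 = 1/2 by ring,
    show d + 1/2 - 1/2 = d by ring]
  have hsne : s ≠ 0 := ne_of_gt hs0
  rw [div_neg, div_neg, div_neg]
  field_simp
  ring

private lemma curv_d {s d : ℝ} (hs0 : 0 < s) (hd : 2 ≤ d) :
    IsFracMeanCurv1 s (Ioo 0 (1/2) ∪ Ioo d (d + 1/2)) d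
      (2/s * ((1/2:ℝ) ^ (-s) + d ^ (-s) - (d - 1/2) ^ (-s))) := by
  unfold IsFracMeanCurv1
  refine Tendsto.congr' ?_ tendsto_const_nhds
  filter_upwards [Ioo_mem_nhdsGT_of_mem
    (by norm_num : (0:ℝ) ∈ Ico (0:ℝ) (1/4))] with δ hδi
  obtain ⟨hδ0, hδ4⟩ := hδi
  set E : Set ℝ := Ioo (0:ℝ) (1/2) ∪ Ioo d (d + 1/2) with hEdef
  have hq : -(1+s) < -1 := by linarith
  have hqne : -(1+s) ≠ -1 := by intro h; nlinarith [neg_injective h]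
  have hED : E ∩ {y : ℝ | δ < |d - y|} = Ioo 0 (1/2) ∪ Ioo (d + δ) (d + 1/2) := by
    rw [dom_eq]
    ext y
    simp only [hEdef, mem_inter_iff, mem_union, mem_Ioo, mem_Iio, mem_Ioi]
    constructor
    · rintro ⟨h1 | h1, h2 | h2⟩
      · exact Or.inl h1
      · exfalso; linarith [h1.2]
      · exfalso; linarith [h1.1]
      · exact Or.inr ⟨h2, h1.2⟩
    · rintro (⟨h1, h2⟩ | ⟨h1, h2⟩)
      · exact ⟨Or.inl ⟨h1, h2⟩, Or.inl (by linarith)⟩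
      · exact ⟨Or.inr ⟨by linarith, h2⟩, Or.inr h1⟩
  have p1 := pieceB (q := -(1+s)) (x := d) (a := 0) (b := 1/2)
    (by linarith) (by linarith) (Or.inr ⟨hqne, by linarith⟩)
  have p2 := pieceA (q := -(1+s)) (x := d) (a := d + δ) (b := d + 1/2)
    (by linarith) (by linarith) (Or.inr ⟨hqne, by linarith⟩)
  have hdisj : Disjoint (Ioo (0:ℝ) (1/2)) (Ioo (d + δ) (d + 1/2)) := by
    rw [Set.disjoint_left]; rintro y ⟨_, h1⟩ ⟨h2, _⟩; linarith
  have hint : IntegrableOn (fun y => |d - y| ^ (-(1+s)))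
      (E ∩ {y : ℝ | δ < |d - y|}) := by
    rw [hED]; exact p1.1.union p2.1
  rw [I_delta_eq (hEmeas d) hq hδ0 hint, hED,
    setIntegral_union hdisj measurableSet_Ioo p1.1 p2.1, p1.2, p2.2,
    show -(1+s) + 1 = -s by ring,
    show d - (0:ℝ) = d by ring, show d + 1/2 - d = 1/2 by ring,
    show d + δ - d = δ by ring]
  have hsne : s ≠ 0 := ne_of_gt hs0
  rw [div_neg, div_neg, div_neg]
  field_simp
  ring

private lemma curv_dhalf {s d : ℝ} (hs0 : 0 < s) (hd : 2 ≤ d) :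
    IsFracMeanCurv1 s (Ioo 0 (1/2) ∪ Ioo d (d + 1/2)) (d + 1/2)
      (2/s * ((1/2:ℝ) ^ (-s) + (d + 1/2) ^ (-s) - d ^ (-s))) := by
  unfold IsFracMeanCurv1
  refine Tendsto.congr' ?_ tendsto_const_nhds
  filter_upwards [Ioo_mem_nhdsGT_of_mem
    (by norm_num : (0:ℝ) ∈ Ico (0:ℝ) (1/4))] with δ hδi
  obtain ⟨hδ0, hδ4⟩ := hδi
  set E : Set ℝ := Ioo (0:ℝ) (1/2) ∪ Ioo d (d + 1/2) with hEdef
  have hq : -(1+s) < -1 := by linarith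
  have hqne : -(1+s) ≠ -1 := by intro h; nlinarith [neg_injective h]
  have hED : E ∩ {y : ℝ | δ < |d + 1/2 - y|} = Ioo 0 (1/2) ∪ Ioo d (d + 1/2 - δ) := by
    rw [dom_eq]
    ext y
    simp only [hEdef, mem_inter_iff, mem_union, mem_Ioo, mem_Iio, mem_Ioi]
    constructor
    · rintro ⟨h1 | h1, h2 | h2⟩
      · exact Or.inl h1
      · exfalso; linarith [h1.2]
      · exact Or.inr ⟨h1.1, h2⟩
      · exfalso; linarith [h1.2]
    · rintro (⟨h1, h2⟩ | ⟨h1, h2⟩)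
      · exact ⟨Or.inl ⟨h1, h2⟩, Or.inl (by linarith)⟩
      · exact ⟨Or.inr ⟨h1, by linarith⟩, Or.inl (by linarith)⟩
  have p1 := pieceB (q := -(1+s)) (x := d + 1/2) (a := 0) (b := 1/2)
    (by linarith) (by linarith) (Or.inr ⟨hqne, by linarith⟩)
  have p2 := pieceB (q := -(1+s)) (x := d + 1/2) (a := d) (b := d + 1/2 - δ)
    (by linarith) (by linarith) (Or.inr ⟨hqne, by linarith⟩)
  have hdisj : Disjoint (Ioo (0:ℝ) (1/2)) (Ioo d (d + 1/2 - δ)) := by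
    rw [Set.disjoint_left]; rintro y ⟨_, h1⟩ ⟨h2, _⟩; linarith
  have hint : IntegrableOn (fun y => |d + 1/2 - y| ^ (-(1+s)))
      (E ∩ {y : ℝ | δ < |d + 1/2 - y|}) := by
    rw [hED]; exact p1.1.union p2.1
  rw [I_delta_eq (hEmeas d) hq hδ0 hint, hED,
    setIntegral_union hdisj measurableSet_Ioo p1.1 p2.1, p1.2, p2.2,
    show -(1+s) + 1 = -s by ring,
    show d + 1/2 - (0:ℝ) = d + 1/2 by ring, show d + 1/2 - 1/2 = d by ring,
    show d + 1/2 - (d + 1/2 - δ) = δ by ring, show d + 1/2 - d = 1/2 by ring]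
  have hsne : s ≠ 0 := ne_of_gt hs0
  rw [div_neg, div_neg, div_neg]
  field_simp
  ring

private lemma Edisj {d : ℝ} (hd : 2 ≤ d) :
    Disjoint (Ioo (0:ℝ) (1/2)) (Ioo d (d + 1/2)) := by
  rw [Set.disjoint_left]; rintro y ⟨_, h1⟩ ⟨h2, _⟩; linarith

private lemma riesz_split {α d x : ℝ} (hα0 : 0 < α) (hα1 : α < 1) (hd : 2 ≤ d)
    (v1 v2 : ℝ)
    (h1 : ∫ y in Ioo (0:ℝ) (1/2), |x - y| ^ (-α) = v1)
    (h2 : ∫ y in Ioo d (d + 1/2), |x - y| ^ (-α) = v2)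
    (i1 : IntegrableOn (fun y => |x - y| ^ (-α)) (Ioo (0:ℝ) (1/2)))
    (i2 : IntegrableOn (fun y => |x - y| ^ (-α)) (Ioo d (d + 1/2))) :
    rieszPot1 α (Ioo 0 (1/2) ∪ Ioo d (d + 1/2)) x = v1 + v2 := by
  rw [rieszPot1, setIntegral_union (Edisj hd) measurableSet_Ioo i1 i2, h1, h2]

private lemma riesz0 {α d : ℝ} (hα0 : 0 < α) (hα1 : α < 1) (hd : 2 ≤ d) :
    rieszPot1 α (Ioo 0 (1/2) ∪ Ioo d (d + 1/2)) 0
      = ((1/2:ℝ) ^ (1-α) + (d + 1/2) ^ (1-α) - d ^ (1-α)) / (1-α) := by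
  have hne : (1:ℝ) - α ≠ 0 := by intro h; linarith
  have p1 := pieceA (q := -α) (x := 0) (a := 0) (b := 1/2)
    le_rfl (by norm_num) (Or.inl (by linarith))
  have p2 := pieceA (q := -α) (x := 0) (a := d) (b := d + 1/2)
    (by linarith) (by linarith) (Or.inl (by linarith))
  rw [riesz_split hα0 hα1 hd _ _ p1.2 p2.2 p1.1 p2.1,
    show -α + 1 = 1 - α by ring]
  rw [sub_zero, sub_zero, sub_zero, Real.zero_rpow hne]
  field_simp
  ring

private lemma riesz_half {α d : ℝ} (hα0 : 0 < α) (hα1 : α < 1) (hd : 2 ≤ d) :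
    rieszPot1 α (Ioo 0 (1/2) ∪ Ioo d (d + 1/2)) (1/2)
      = ((1/2:ℝ) ^ (1-α) + d ^ (1-α) - (d - 1/2) ^ (1-α)) / (1-α) := by
  have hne : (1:ℝ) - α ≠ 0 := by intro h; linarith
  have p1 := pieceB (q := -α) (x := 1/2) (a := 0) (b := 1/2)
    (by norm_num) le_rfl (Or.inl (by linarith))
  have p2 := pieceA (q := -α) (x := 1/2) (a := d) (b := d + 1/2)
    (by linarith) (by linarith) (Or.inl (by linarith))
  rw [riesz_split hα0 hα1 hd _ _ p1.2 p2.2 p1.1 p2.1,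
    show -α + 1 = 1 - α by ring]
  rw [sub_zero, sub_self, Real.zero_rpow hne,
    show d + 1/2 - 1/2 = d by ring]
  field_simp
  ring

private lemma riesz_d {α d : ℝ} (hα0 : 0 < α) (hα1 : α < 1) (hd : 2 ≤ d) :
    rieszPot1 α (Ioo 0 (1/2) ∪ Ioo d (d + 1/2)) d
      = ((1/2:ℝ) ^ (1-α) + d ^ (1-α) - (d - 1/2) ^ (1-α)) / (1-α) := by
  have hne : (1:ℝ) - α ≠ 0 := by intro h; linarith
  have p1 := pieceB (q := -α) (x := d) (a := 0) (b := 1/2)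
    (by norm_num) (by linarith) (Or.inl (by linarith))
  have p2 := pieceA (q := -α) (x := d) (a := d) (b := d + 1/2)
    le_rfl (by linarith) (Or.inl (by linarith))
  rw [riesz_split hα0 hα1 hd _ _ p1.2 p2.2 p1.1 p2.1,
    show -α + 1 = 1 - α by ring]
  rw [sub_zero, sub_self, Real.zero_rpow hne,
    show d + 1/2 - d = 1/2 by ring]
  field_simp
  ring

private lemma riesz_dhalf {α d : ℝ} (hα0 : 0 < α) (hα1 : α < 1) (hd : 2 ≤ d) :
    rieszPot1 α (Ioo 0 (1/2) ∪ Ioo d (d + 1/2)) (d + 1/2)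
      = ((1/2:ℝ) ^ (1-α) + (d + 1/2) ^ (1-α) - d ^ (1-α)) / (1-α) := by
  have hne : (1:ℝ) - α ≠ 0 := by intro h; linarith
  have p1 := pieceB (q := -α) (x := d + 1/2) (a := 0) (b := 1/2)
    (by norm_num) (by linarith) (Or.inl (by linarith))
  have p2 := pieceB (q := -α) (x := d + 1/2) (a := d) (b := d + 1/2)
    (by linarith) le_rfl (Or.inl (by linarith))
  rw [riesz_split hα0 hα1 hd _ _ p1.2 p2.2 p1.1 p2.1,
    show -α + 1 = 1 - α by ring]
  rw [sub_zero, sub_self, Real.zero_rpow hne,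
    show d + 1/2 - 1/2 = d by ring, show d + 1/2 - d = 1/2 by ring]
  field_simp
  ring

private lemma hasDeriv_rpow_shift (p e t : ℝ) (ht : t + e ≠ 0) :
    HasDerivAt (fun u : ℝ => (u + e) ^ p) (p * (t + e) ^ (p - 1)) t := by
  have h := ((hasDerivAt_id t).add_const e).rpow_const (p := p) (Or.inl ht)
  simpa using h

private lemma second_diff {p d : ℝ} (hd : 2 ≤ d) :
    ∃ η ∈ Ioo (d - 1/2) (d + 1),
      (d + 1/2) ^ p - 2 * d ^ p + (d - 1/2) ^ p = 1/4 * (p * (p - 1) * η ^ (p - 2)) := by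
  -- first mean value theorem for D(t) = (t+1/2)^p - t^p on [d-1/2, d]
  set D : ℝ → ℝ := fun t => (t + 1/2) ^ p - t ^ p with hD
  set D' : ℝ → ℝ := fun t => p * (t + 1/2) ^ (p - 1) - p * t ^ (p - 1) with hD'
  have hder : ∀ t ∈ Ioo (d - 1/2) d, HasDerivAt D (D' t) t := by
    intro t ht
    obtain ⟨h1, h2⟩ := ht
    have ht0 : t ≠ 0 := by intro h; rw [h] at h1; linarith
    have ht2 : t + 1/2 ≠ 0 := by intro h; nlinarith
    exact ((hasDeriv_rpow_shift p (1/2) t ht2).sub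
      (by simpa using hasDeriv_rpow_shift p 0 t (by simpa using ht0)))
  have hcont : ContinuousOn D (Icc (d - 1/2) d) := by
    apply ContinuousOn.sub
    · apply ContinuousOn.rpow_const (by fun_prop)
      intro t ht
      obtain ⟨h1, _⟩ := ht
      exact Or.inl (by intro h; nlinarith)
    · apply ContinuousOn.rpow_const (by fun_prop)
      intro t ht
      obtain ⟨h1, _⟩ := ht
      exact Or.inl (by intro h; nlinarith)
  obtain ⟨ξ, hξ, hξeq⟩ := exists_hasDerivAt_eq_slope D D' (by linarith : d - 1/2 < d) hcont hder
  -- second MVT for G(t) = t^(p-1) on [ξ, ξ + 1/2]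
  set G : ℝ → ℝ := fun t => t ^ (p - 1) with hG
  set G' : ℝ → ℝ := fun t => (p - 1) * t ^ (p - 2) with hG'
  have hξ1 : d - 1/2 < ξ := hξ.1
  have hξ2 : ξ < d := hξ.2
  have hgder : ∀ t ∈ Ioo ξ (ξ + 1/2), HasDerivAt G (G' t) t := by
    intro t ht
    obtain ⟨h1, _⟩ := ht
    have ht0 : t ≠ 0 := by intro h; nlinarith
    have := (hasDerivAt_id t).rpow_const (p := p - 1) (Or.inl ht0)
    simpa [hG, hG', sub_sub, show (1:ℝ)+1 = 2 by norm_num] using this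
  have hgcont : ContinuousOn G (Icc ξ (ξ + 1/2)) := by
    apply ContinuousOn.rpow_const (by fun_prop)
    intro t ht
    obtain ⟨h1, _⟩ := ht
    exact Or.inl (by intro h; nlinarith)
  obtain ⟨η, hη, hηeq⟩ := exists_hasDerivAt_eq_slope G G'
    (by linarith : ξ < ξ + 1/2) hgcont hgder
  refine ⟨η, ⟨by linarith [hη.1], by linarith [hη.2]⟩, ?_⟩
  have e1 : D d - D (d - 1/2) = (1/2) * D' ξ := by
    rw [hξeq]; field_simp; ring
  have e2 : G (ξ + 1/2) - G ξ = (1/2) * G' η := by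
    rw [hηeq]; field_simp; ring
  have e3 : (d + 1/2) ^ p - 2 * d ^ p + (d - 1/2) ^ p = D d - D (d - 1/2) := by
    simp only [hD]
    rw [show d - 1/2 + 1/2 = d by ring]
    ring
  rw [e3, e1]
  have e4 : D' ξ = p * (G (ξ + 1/2) - G ξ) := by
    simp only [hD', hG]; ring
  rw [e4, e2]
  simp only [hG']
  ring

private def Ffun (s α c ε : ℝ) : ℝ → ℝ := fun d =>
  2/s * ((d + 1/2) ^ (-s) - 2 * d ^ (-s) + (d - 1/2) ^ (-s))
  + c * ε * (((d + 1/2) ^ (1-α) - 2 * d ^ (1-α) + (d - 1/2) ^ (1-α)) / (1-α))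

private lemma F_repr {s α c ε d : ℝ} (hs0 : 0 < s) (hα1 : α < 1) (hd : 2 ≤ d) :
    ∃ η₁ ∈ Icc (d/2) (2*d), ∃ η₂ ∈ Icc (d/2) (2*d),
      Ffun s α c ε d = (s+1)/2 * η₁ ^ (-(s+2)) - c*ε*α/4 * η₂ ^ (-(1+α)) := by
  obtain ⟨η₁, hη₁, e₁⟩ := second_diff (p := -s) hd
  obtain ⟨η₂, hη₂, e₂⟩ := second_diff (p := 1-α) hd
  have hsne : s ≠ 0 := ne_of_gt hs0
  have hαne : (1:ℝ) - α ≠ 0 := by intro h; linarith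
  refine ⟨η₁, ⟨by linarith [hη₁.1], by linarith [hη₁.2]⟩,
    η₂, ⟨by linarith [hη₂.1], by linarith [hη₂.2]⟩, ?_⟩
  simp only [Ffun]
  rw [e₁, e₂, show -s - 2 = -(s+2) by ring, show 1 - α - 2 = -(1+α) by ring]
  field_simp
  ring

private lemma F_pos {s α c ε d : ℝ} (hs0 : 0 < s) (hα0 : 0 < α) (hα1 : α < 1)
    (hc : 0 < c) (hε : 0 < ε) (hd : 2 ≤ d)
    (hK : ε * d ^ (1+s-α) < ((s+1)/2 * (2:ℝ) ^ (-(s+2))) / (c*α/4 * (2:ℝ) ^ (1+α))) :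
    0 < Ffun s α c ε d := by
  obtain ⟨η₁, hη₁, η₂, hη₂, hrep⟩ := F_repr (c := c) (ε := ε) hs0 hα1 hd
  have hd0 : (0:ℝ) < d := by linarith
  have hη₁0 : 0 < η₁ := lt_of_lt_of_le (by linarith) hη₁.1
  have hη₂0 : 0 < η₂ := lt_of_lt_of_le (by linarith) hη₂.1
  have b1 : (2*d) ^ (-(s+2)) ≤ η₁ ^ (-(s+2)) :=
    Real.rpow_le_rpow_of_nonpos hη₁0 hη₁.2 (by linarith)
  have b2 : η₂ ^ (-(1+α)) ≤ (d/2) ^ (-(1+α)) :=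
    Real.rpow_le_rpow_of_nonpos (by positivity) hη₂.1 (by linarith)
  have hB : (0:ℝ) < c*α/4 * (2:ℝ) ^ (1+α) := by positivity
  have hK' : ε * d ^ (1+s-α) * (c*α/4 * (2:ℝ) ^ (1+α)) < (s+1)/2 * (2:ℝ) ^ (-(s+2)) :=
    (lt_div_iff₀ hB).mp hK
  set Y := d ^ (1+s-α) with hYdef
  have hYpos : 0 < Y := Real.rpow_pos_of_pos hd0 _
  set X := d ^ (-(1+α)) with hXdef
  have hXpos : 0 < X := Real.rpow_pos_of_pos hd0 _
  have e3 : d ^ (-(s+2)) = X * Y⁻¹ := by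
    rw [hXdef, hYdef, ← Real.rpow_neg hd0.le, ← Real.rpow_add hd0]
    ring_nf
  have e1 : (2*d) ^ (-(s+2)) = 2 ^ (-(s+2)) * (X * Y⁻¹) := by
    rw [Real.mul_rpow (by norm_num) hd0.le, e3]
  have e2 : (d/2) ^ (-(1+α)) = X * 2 ^ (1+α) := by
    rw [div_eq_mul_inv, Real.mul_rpow hd0.le (by norm_num),
      Real.inv_rpow (by norm_num), ← Real.rpow_neg (by norm_num), neg_neg, hXdef]
  have key : c*ε*α/4 * (d/2) ^ (-(1+α)) < (s+1)/2 * (2*d) ^ (-(s+2)) := by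
    rw [e1, e2]
    calc c*ε*α/4 * (X * 2 ^ (1+α))
        = ε * Y * (c*α/4 * (2:ℝ) ^ (1+α)) * (X * Y⁻¹) := by
          field_simp
      _ < (s+1)/2 * (2:ℝ) ^ (-(s+2)) * (X * Y⁻¹) :=
          mul_lt_mul_of_pos_right hK' (by positivity)
      _ = (s+1)/2 * ((2:ℝ) ^ (-(s+2)) * (X * Y⁻¹)) := by ring
  rw [hrep]
  have h1 : (s+1)/2 * (2*d) ^ (-(s+2)) ≤ (s+1)/2 * η₁ ^ (-(s+2)) := by
    apply mul_le_mul_of_nonneg_left b1 (by positivity)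
  have h2 : c*ε*α/4 * η₂ ^ (-(1+α)) ≤ c*ε*α/4 * (d/2) ^ (-(1+α)) := by
    apply mul_le_mul_of_nonneg_left b2 (by positivity)
  linarith

private lemma F_neg {s α c ε d : ℝ} (hs0 : 0 < s) (hα0 : 0 < α) (hα1 : α < 1)
    (hc : 0 < c) (hε : 0 < ε) (hd : 2 ≤ d)
    (hK : ((s+1)/2 * (2:ℝ) ^ (s+2)) / (c*α/4 * (2:ℝ) ^ (-(1+α))) < ε * d ^ (1+s-α)) :
    Ffun s α c ε d < 0 := by
  obtain ⟨η₁, hη₁, η₂, hη₂, hrep⟩ := F_repr (c := c) (ε := ε) hs0 hα1 hd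
  have hd0 : (0:ℝ) < d := by linarith
  have hη₁0 : 0 < η₁ := lt_of_lt_of_le (by linarith) hη₁.1
  have hη₂0 : 0 < η₂ := lt_of_lt_of_le (by linarith) hη₂.1
  have b1 : η₁ ^ (-(s+2)) ≤ (d/2) ^ (-(s+2)) :=
    Real.rpow_le_rpow_of_nonpos (by positivity) hη₁.1 (by linarith)
  have b2 : (2*d) ^ (-(1+α)) ≤ η₂ ^ (-(1+α)) :=
    Real.rpow_le_rpow_of_nonpos hη₂0 hη₂.2 (by linarith)
  have hB : (0:ℝ) < c*α/4 * (2:ℝ) ^ (-(1+α)) := by positivity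
  have hK' : (s+1)/2 * (2:ℝ) ^ (s+2) < ε * d ^ (1+s-α) * (c*α/4 * (2:ℝ) ^ (-(1+α))) :=
    (div_lt_iff₀ hB).mp hK
  set Y := d ^ (1+s-α) with hYdef
  have hYpos : 0 < Y := Real.rpow_pos_of_pos hd0 _
  set X := d ^ (-(1+α)) with hXdef
  have hXpos : 0 < X := Real.rpow_pos_of_pos hd0 _
  have e3 : d ^ (-(s+2)) = X * Y⁻¹ := by
    rw [hXdef, hYdef, ← Real.rpow_neg hd0.le, ← Real.rpow_add hd0]
    ring_nf
  have e1 : (d/2) ^ (-(s+2)) = 2 ^ (s+2) * (X * Y⁻¹) := by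
    rw [div_eq_mul_inv, Real.mul_rpow hd0.le (by norm_num),
      Real.inv_rpow (by norm_num), ← Real.rpow_neg (by norm_num), neg_neg, e3]
    ring
  have e2 : (2*d) ^ (-(1+α)) = 2 ^ (-(1+α)) * X := by
    rw [Real.mul_rpow (by norm_num) hd0.le, hXdef]
  have key : (s+1)/2 * (d/2) ^ (-(s+2)) < c*ε*α/4 * (2*d) ^ (-(1+α)) := by
    rw [e1, e2]
    calc (s+1)/2 * (2 ^ (s+2) * (X * Y⁻¹))
        = (s+1)/2 * (2:ℝ) ^ (s+2) * (X * Y⁻¹) := by ring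
      _ < ε * Y * (c*α/4 * (2:ℝ) ^ (-(1+α))) * (X * Y⁻¹) :=
          mul_lt_mul_of_pos_right hK' (by positivity)
      _ = c*ε*α/4 * ((2:ℝ) ^ (-(1+α)) * X) := by
          field_simp
  rw [hrep]
  have h1 : (s+1)/2 * η₁ ^ (-(s+2)) ≤ (s+1)/2 * (d/2) ^ (-(s+2)) := by
    apply mul_le_mul_of_nonneg_left b1 (by positivity)
  have h2 : c*ε*α/4 * (2*d) ^ (-(1+α)) ≤ c*ε*α/4 * η₂ ^ (-(1+α)) := by
    apply mul_le_mul_of_nonneg_left b2 (by positivity)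
  linarith

private lemma exists_root {s α c ε : ℝ} (hs0 : 0 < s) (hs1 : s < 1)
    (hα0 : 0 < α) (hα1 : α < 1) (hc : 0 < c) (hε : 0 < ε)
    (hεb : ε < (((s+1)/2 * (2:ℝ) ^ (-(s+2))) / (c*α/4 * (2:ℝ) ^ (1+α)))
        / (2 * 2 ^ (1+s-α))) :
    ∃ d : ℝ, 2 ≤ d ∧ Ffun s α c ε d = 0 ∧
      ((((s+1)/2 * (2:ℝ) ^ (-(s+2))) / (c*α/4 * (2:ℝ) ^ (1+α))) / 2) ^ (1/(1+s-α))
        * ε ^ (-(1/(1+s-α))) ≤ d := by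
  set p : ℝ := 1 + s - α with hpdef
  have hp : 0 < p := by simp only [hpdef]; linarith
  set K : ℝ := ((s+1)/2 * (2:ℝ) ^ (-(s+2))) / (c*α/4 * (2:ℝ) ^ (1+α)) with hKdef
  set K' : ℝ := ((s+1)/2 * (2:ℝ) ^ (s+2)) / (c*α/4 * (2:ℝ) ^ (-(1+α))) with hK'def
  have hKpos : 0 < K := by positivity
  have hK'pos : 0 < K' := by positivity
  set d1 : ℝ := (K/(2*ε)) ^ (1/p) with hd1def
  have hbase : 0 < K/(2*ε) := by positivity
  have hd1pow : d1 ^ p = K/(2*ε) := by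
    rw [hd1def, ← Real.rpow_mul hbase.le, one_div, inv_mul_cancel₀ hp.ne', Real.rpow_one]
  have h2p : (2:ℝ) ^ p < K/(2*ε) := by
    rw [lt_div_iff₀ (by positivity)]
    have := (lt_div_iff₀ (by positivity : (0:ℝ) < 2 * 2 ^ p)).mp hεb
    nlinarith [Real.rpow_pos_of_pos (by norm_num : (0:ℝ) < 2) p]
  have hd1ge2 : 2 ≤ d1 := by
    have h1 : ((2:ℝ) ^ p) ^ (1/p) ≤ (K/(2*ε)) ^ (1/p) :=
      Real.rpow_le_rpow (by positivity) h2p.le (by positivity)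
    rwa [← Real.rpow_mul (by norm_num) p (1/p), mul_one_div, div_self hp.ne',
      Real.rpow_one] at h1
  have hKd1 : ε * d1 ^ p < K := by
    rw [hd1pow]
    rw [show ε * (K/(2*ε)) = K/2 by field_simp]
    linarith
  set d2 : ℝ := d1 + (2*K'/ε) ^ (1/p) with hd2def
  have hd2base : (0:ℝ) ≤ (2*K'/ε) ^ (1/p) := Real.rpow_nonneg (by positivity) _
  have hd12 : d1 ≤ d2 := by simp only [hd2def]; linarith
  have hd2ge2 : 2 ≤ d2 := le_trans hd1ge2 hd12
  have hK'd2 : K' < ε * d2 ^ p := by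
    have hstep : (2*K'/ε) ≤ d2 ^ p := by
      have h1 : ((2*K'/ε) ^ (1/p)) ^ p ≤ d2 ^ p :=
        Real.rpow_le_rpow (by positivity) (by simp only [hd2def]; linarith [le_trans (by norm_num : (0:ℝ) ≤ 2) hd1ge2]) hp.le
      rwa [← Real.rpow_mul (by positivity), one_div, inv_mul_cancel₀ hp.ne',
        Real.rpow_one] at h1
    have : 2*K' ≤ ε * d2 ^ p := by
      rw [div_le_iff₀ hε] at hstep
      linarith [hstep]
    linarith
  -- continuity
  have hb2 : ∀ t ∈ Icc d1 d2, (2:ℝ) ≤ t := fun t ht => le_trans hd1ge2 ht.1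
  have hcont : ContinuousOn (Ffun s α c ε) (Icc d1 d2) := by
    have c1 : ∀ e : ℝ, ContinuousOn (fun t : ℝ => (t + 1/2) ^ e) (Icc d1 d2) := by
      intro e
      exact ContinuousOn.rpow_const (by fun_prop)
        (fun t ht => Or.inl (by have := hb2 t ht; intro h; linarith))
    have c2 : ∀ e : ℝ, ContinuousOn (fun t : ℝ => t ^ e) (Icc d1 d2) := by
      intro e
      exact ContinuousOn.rpow_const (by fun_prop)
        (fun t ht => Or.inl (by have := hb2 t ht; intro h; linarith))
    have c3 : ∀ e : ℝ, ContinuousOn (fun t : ℝ => (t - 1/2) ^ e) (Icc d1 d2) := by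
      intro e
      exact ContinuousOn.rpow_const (by fun_prop)
        (fun t ht => Or.inl (by have := hb2 t ht; intro h; linarith))
    exact (continuousOn_const.mul
        (((c1 (-s)).sub (continuousOn_const.mul (c2 (-s)))).add (c3 (-s)))).add
      (continuousOn_const.mul
        ((((c1 (1-α)).sub (continuousOn_const.mul (c2 (1-α)))).add (c3 (1-α))).div_const _))
  have hivt := intermediate_value_Icc' hd12 hcont
  have h0mem : (0:ℝ) ∈ Icc (Ffun s α c ε d2) (Ffun s α c ε d1) :=
    ⟨(F_neg hs0 hα0 hα1 hc hε hd2ge2 hK'd2).le, (F_pos hs0 hα0 hα1 hc hε hd1ge2 hKd1).le⟩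
  obtain ⟨d, hdmem, hFd⟩ := hivt h0mem
  refine ⟨d, le_trans hd1ge2 hdmem.1, hFd, ?_⟩
  have heq : (K/2) ^ (1/p) * ε ^ (-(1/p)) = d1 := by
    rw [Real.rpow_neg hε.le, ← Real.inv_rpow hε.le,
      ← Real.mul_rpow (by positivity) (by positivity), hd1def]
    congr 1
    field_simp
  calc (K/2) ^ (1/p) * ε ^ (-(1/p)) = d1 := heq
    _ ≤ d := hdmem.1

private lemma frontier_E {d : ℝ} (hd : 2 ≤ d) :
    frontier (Ioo (0:ℝ) (1/2) ∪ Ioo d (d + 1/2)) = {0, 1/2, d, d + 1/2} := by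
  have hopen : IsOpen (Ioo (0:ℝ) (1/2) ∪ Ioo d (d + 1/2)) := isOpen_Ioo.union isOpen_Ioo
  rw [hopen.frontier_eq, closure_union, closure_Ioo (by norm_num : (0:ℝ) ≠ 1/2),
    closure_Ioo (by intro h; linarith : d ≠ d + 1/2)]
  ext y
  simp only [mem_diff, mem_union, mem_Icc, mem_Ioo, mem_insert_iff, mem_singleton_iff]
  constructor
  · rintro ⟨h1 | h1, h2⟩
    · push_neg at h2
      obtain ⟨ha, hb⟩ := h1
      rcases eq_or_lt_of_le ha with rfl | ha'
      · exact Or.inl rfl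
      · rcases eq_or_lt_of_le hb with he | hb'
        · exact Or.inr (Or.inl he)
        · exact absurd (h2.1 ha') (not_le.mpr hb')
    · push_neg at h2
      obtain ⟨ha, hb⟩ := h1
      rcases eq_or_lt_of_le ha with rfl | ha'
      · exact Or.inr (Or.inr (Or.inl rfl))
      · rcases eq_or_lt_of_le hb with he | hb'
        · exact Or.inr (Or.inr (Or.inr he))
        · exact absurd (h2.2 ha') (not_le.mpr hb')
  · rintro (rfl | rfl | rfl | rfl)
    · refine ⟨Or.inl ⟨le_refl _, by norm_num⟩, ?_⟩
      push_neg
      exact ⟨fun h => absurd h (lt_irrefl _), fun h => by linarith⟩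
    · refine ⟨Or.inl ⟨by norm_num, le_refl _⟩, ?_⟩
      push_neg
      exact ⟨fun _ => le_refl _, fun h => by linarith⟩
    · refine ⟨Or.inr ⟨le_refl _, by linarith⟩, ?_⟩
      push_neg
      exact ⟨fun h => by linarith, fun h => absurd h (lt_irrefl _)⟩
    · refine ⟨Or.inr ⟨by linarith, le_refl _⟩, ?_⟩
      push_neg
      exact ⟨fun h => by linarith, fun _ => le_refl _⟩

private lemma not_preconnected_E {d : ℝ} (hd : 2 ≤ d) :
    ¬ IsPreconnected (Ioo (0:ℝ) (1/2) ∪ Ioo d (d + 1/2)) := by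
  intro h
  have ho := h.ordConnected
  have h1 : (1/4 : ℝ) ∈ Ioo (0:ℝ) (1/2) ∪ Ioo d (d + 1/2) := Or.inl (by norm_num)
  have h2 : d + 1/4 ∈ Ioo (0:ℝ) (1/2) ∪ Ioo d (d + 1/2) :=
    Or.inr ⟨by linarith, by linarith⟩
  have h3 : (1:ℝ) ∈ Icc (1/4 : ℝ) (d + 1/4) := ⟨by norm_num, by linarith⟩
  have := ho.out h1 h2 h3
  rcases this with h | h
  · exact absurd h.2 (by norm_num)
  · exact absurd h.1 (by linarith)

private lemma diam_E {d : ℝ} (hd : 2 ≤ d) :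
    Metric.diam (Ioo (0:ℝ) (1/2) ∪ Ioo d (d + 1/2)) = d + 1/2 := by
  set E : Set ℝ := Ioo (0:ℝ) (1/2) ∪ Ioo d (d + 1/2) with hE
  have hsub : E ⊆ Icc 0 (d + 1/2) := by
    rintro y (⟨h1, h2⟩ | ⟨h1, h2⟩) <;> exact ⟨by linarith, by linarith⟩
  have hb : IsBounded (Icc (0:ℝ) (d + 1/2)) := isBounded_Icc _ _
  have h1 : Metric.diam E ≤ d + 1/2 := by
    calc Metric.diam E ≤ Metric.diam (Icc (0:ℝ) (d + 1/2)) := Metric.diam_mono hsub hb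
      _ = d + 1/2 := by rw [Real.diam_Icc (by linarith)]; ring
  have hcl : Icc (0:ℝ) (1/2) ∪ Icc d (d + 1/2) = closure E := by
    rw [hE, closure_union, closure_Ioo (by norm_num : (0:ℝ) ≠ 1/2),
      closure_Ioo (by intro h; linarith : d ≠ d + 1/2)]
  have h0cl : (0:ℝ) ∈ closure E := by
    rw [← hcl]; exact Or.inl ⟨le_refl _, by norm_num⟩
  have hdcl : d + 1/2 ∈ closure E := by
    rw [← hcl]; exact Or.inr ⟨by linarith, le_refl _⟩
  have hbcl : IsBounded (closure E) := by
    rw [← hcl]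
    exact (isBounded_Icc _ _).union (isBounded_Icc _ _)
  have h2 : d + 1/2 ≤ Metric.diam E := by
    have := Metric.dist_le_diam_of_mem hbcl h0cl hdcl
    rw [Metric.diam_closure] at this
    calc d + 1/2 = dist (0:ℝ) (d + 1/2) := by
          rw [Real.dist_eq, abs_of_nonpos (by linarith)]; ring
      _ ≤ Metric.diam E := this
  linarith

/-- For every small `ε > 0` there is `d > 1/2` such that
`E = (0,1/2) ∪ (d,d+1/2)` solves the Euler–Lagrange equation `κ_E + cεV_E = λ` at all four
boundary points, is disconnected (two components), and has diameter
`d + 1/2 ≥ C_o ε^{-1/(1+s-α)}`; in particular critical points need not have uniformly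
bounded diameter. -/
theorem stmt2 (s α c : ℝ) (hs : s ∈ Ioo (0 : ℝ) 1) (hα : α ∈ Ioo (0 : ℝ) 1) (hc : 0 < c) :
    ∃ εbar : ℝ, 0 < εbar ∧ ∃ Co : ℝ, 0 < Co ∧
      ∀ ε ∈ Ioo (0 : ℝ) εbar, ∃ d : ℝ, 1 / 2 < d ∧
        (∃ lam : ℝ, ∀ x ∈ ({0, 1 / 2, d, d + 1 / 2} : Set ℝ), ∃ κ : ℝ,
            IsFracMeanCurv1 s (Ioo 0 (1 / 2) ∪ Ioo d (d + 1 / 2)) x κ ∧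
            κ + c * ε * rieszPot1 α (Ioo 0 (1 / 2) ∪ Ioo d (d + 1 / 2)) x = lam) ∧
        frontier (Ioo (0 : ℝ) (1 / 2) ∪ Ioo d (d + 1 / 2)) = {0, 1 / 2, d, d + 1 / 2} ∧
        ¬ IsPreconnected (Ioo (0 : ℝ) (1 / 2) ∪ Ioo d (d + 1 / 2)) ∧
        Metric.diam (Ioo (0 : ℝ) (1 / 2) ∪ Ioo d (d + 1 / 2)) = d + 1 / 2 ∧
        Co * ε ^ (-(1 / (1 + s - α))) ≤ d + 1 / 2 := by
  obtain ⟨hs0, hs1⟩ := hs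
  obtain ⟨hα0, hα1⟩ := hα
  set K : ℝ := ((s+1)/2 * (2:ℝ) ^ (-(s+2))) / (c*α/4 * (2:ℝ) ^ (1+α)) with hKdef
  have hKpos : 0 < K := by positivity
  refine ⟨K / (2 * 2 ^ (1+s-α)), by positivity, (K/2) ^ (1/(1+s-α)), by positivity, ?_⟩
  rintro ε ⟨hε0, hεb⟩
  obtain ⟨d, hd2, hFd, hd1le⟩ := exists_root hs0 hs1 hα0 hα1 hc hε0 hεb
  have hdhalf : 1/2 < d := by linarith
  refine ⟨d, hdhalf, ?_, frontier_E hd2, not_preconnected_E hd2, diam_E hd2, ?_⟩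
  · refine ⟨2/s * ((1/2:ℝ) ^ (-s) + (d + 1/2) ^ (-s) - d ^ (-s))
      + c * ε * (((1/2:ℝ) ^ (1-α) + (d + 1/2) ^ (1-α) - d ^ (1-α)) / (1-α)), ?_⟩
    rintro x hx
    have hF0 : 2/s * ((d + 1/2) ^ (-s) - 2 * d ^ (-s) + (d - 1/2) ^ (-s))
        + c * ε * (((d + 1/2) ^ (1-α) - 2 * d ^ (1-α) + (d - 1/2) ^ (1-α)) / (1-α)) = 0 := by
      simpa [Ffun] using hFd
    simp only [mem_insert_iff, mem_singleton_iff] at hx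
    rcases hx with rfl | rfl | rfl | rfl
    · exact ⟨_, curv0 hs0 hd2, by rw [riesz0 hα0 hα1 hd2]⟩
    · refine ⟨_, curv_half hs0 hd2, ?_⟩
      rw [riesz_half hα0 hα1 hd2]
      linear_combination -hF0
    · refine ⟨_, curv_d hs0 hd2, ?_⟩
      rw [riesz_d hα0 hα1 hd2]
      linear_combination -hF0
    · exact ⟨_, curv_dhalf hs0 hd2, by rw [riesz_dhalf hα0 hα1 hd2]⟩
  · linarith
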